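/- The partial derivative of the mutual information I(X_i;Y) with respect to a channel entry q(y|x), with the joint input distribution p(x) held fixed, equals p(x) log(p(y|x_i)/p(y)), where x = (x_i, x_{-i}). -/

import Mathlib

open Finset Real

/-- The partial derivative of `I(X_i;Y)` with respect to the
channel entry `q(y₀|a,m)` (input distribution fixed, entries treated as free
variables) equals `p(a,m) * log (p(y₀|a) / p(y₀))`. -/
theorem mutual_info_deriv_in_channel_entry
    {Xi Xmi Y : Type*} [Fintype Xi] [Fintype Xmi] [Fintype Y]
    [DecidableEq Xi] [DecidableEq Xmi] [DecidableEq Y]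
    (pi : Xi → ℝ) (pc : Xi → Xmi → ℝ) (Q : Xi → Xmi → Y → ℝ)
    (hpi : ∀ xi, 0 < pi xi) (hpc : ∀ xi xmi, 0 < pc xi xmi)
    (hQ : ∀ xi xmi y, 0 < Q xi xmi y)
    -- mutual information as a function of the channel matrix
    (MI : (Xi → Xmi → Y → ℝ) → ℝ)
    (hMI : ∀ Q' : Xi → Xmi → Y → ℝ, MI Q' =
      ∑ xi, ∑ xmi, ∑ y, pi xi * pc xi xmi * Q' xi xmi y *
        Real.log ((∑ xmi', pc xi xmi' * Q' xi xmi' y) /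
          (∑ xi', ∑ xmi', pi xi' * pc xi' xmi' * Q' xi' xmi' y)))
    (a : Xi) (m : Xmi) (y₀ : Y) :
    HasDerivAt
      (fun t : ℝ => MI (fun xi xmi y =>
        if xi = a ∧ xmi = m ∧ y = y₀ then Q xi xmi y + t else Q xi xmi y))
      (pi a * pc a m *
        Real.log ((∑ xmi', pc a xmi' * Q a xmi' y₀) /
          (∑ xi', ∑ xmi', pi xi' * pc xi' xmi' * Q xi' xmi' y₀)))
      0 := by
  classical
  have hXmi : Nonempty Xmi := ⟨m⟩
  have hXi : Nonempty Xi := ⟨a⟩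
  -- abbreviations
  let N₀ : Xi → Y → ℝ := fun xi y => ∑ xmi', pc xi xmi' * Q xi xmi' y
  let D₀ : Y → ℝ := fun y => ∑ xi', ∑ xmi', pi xi' * pc xi' xmi' * Q xi' xmi' y
  have hN : ∀ xi y, 0 < N₀ xi y := fun xi y =>
    Finset.sum_pos (fun xmi' _ => mul_pos (hpc xi xmi') (hQ xi xmi' y)) Finset.univ_nonempty
  have hD : ∀ y, 0 < D₀ y := fun y =>
    Finset.sum_pos (fun xi' _ =>
      Finset.sum_pos (fun xmi' _ =>
        mul_pos (mul_pos (hpi xi') (hpc xi' xmi')) (hQ xi' xmi' y)) Finset.univ_nonempty)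
      Finset.univ_nonempty
  let e : Xi → Xmi → Y → ℝ := fun xi xmi y => if xi = a ∧ xmi = m ∧ y = y₀ then 1 else 0
  let nE : Xi → Y → ℝ := fun xi y => if xi = a ∧ y = y₀ then pc a m else 0
  let dE : Y → ℝ := fun y => if y = y₀ then pi a * pc a m else 0
  -- channel rewrite
  have hch : ∀ t : ℝ, (fun xi xmi y =>
      if xi = a ∧ xmi = m ∧ y = y₀ then Q xi xmi y + t else Q xi xmi y)
      = fun xi xmi y => Q xi xmi y + t * e xi xmi y := by
    intro t; funext xi xmi y
    by_cases h : xi = a ∧ xmi = m ∧ y = y₀ <;> simp [e, h]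
  have hsumN : ∀ (t : ℝ) xi y,
      (∑ xmi', pc xi xmi' * (Q xi xmi' y + t * e xi xmi' y)) = N₀ xi y + t * nE xi y := by
    intro t xi y
    simp only [mul_add, Finset.sum_add_distrib]
    congr 1
    rw [show (t * nE xi y) = ∑ xmi', t * (pc xi xmi' * e xi xmi' y) from ?_]
    · exact Finset.sum_congr rfl fun xmi' _ => by ring
    · rw [← Finset.mul_sum]
      congr 1
      by_cases h1 : xi = a
      · by_cases h2 : y = y₀
        · subst h1; subst h2
          simp [nE, e, mul_ite, Finset.sum_ite_eq', Finset.mem_univ]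
        · simp [nE, e, h2]
      · simp [nE, e, h1]
  have hsumD : ∀ (t : ℝ) y,
      (∑ xi', ∑ xmi', pi xi' * pc xi' xmi' * (Q xi' xmi' y + t * e xi' xmi' y))
        = D₀ y + t * dE y := by
    intro t y
    simp only [mul_add, Finset.sum_add_distrib]
    congr 1
    rw [show (t * dE y) = ∑ xi', ∑ xmi', t * (pi xi' * pc xi' xmi' * e xi' xmi' y) from ?_]
    · exact Finset.sum_congr rfl fun xi' _ => Finset.sum_congr rfl fun xmi' _ => by ring
    · simp_rw [← Finset.mul_sum]
      congr 1
      by_cases h2 : y = y₀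
      · subst h2
        rw [Fintype.sum_eq_single a (fun xi' hxi' => by simp [e, hxi'])]
        simp [dE, e, mul_ite, Finset.sum_ite_eq', Finset.mem_univ]
      · simp [dE, e, h2]
  -- rewrite the function
  have hF : (fun t : ℝ => MI (fun xi xmi y =>
        if xi = a ∧ xmi = m ∧ y = y₀ then Q xi xmi y + t else Q xi xmi y))
      = fun t : ℝ => ∑ xi, ∑ xmi, ∑ y,
          pi xi * pc xi xmi * (Q xi xmi y + t * e xi xmi y) *
            Real.log ((N₀ xi y + t * nE xi y) / (D₀ y + t * dE y)) := by
    funext t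
    rw [hch t, hMI]
    exact Finset.sum_congr rfl fun xi _ => Finset.sum_congr rfl fun xmi _ =>
      Finset.sum_congr rfl fun y _ => by rw [hsumN, hsumD]
  rw [hF]
  -- derivative of each summand
  have hderiv : ∀ xi xmi y, HasDerivAt
      (fun t : ℝ => pi xi * pc xi xmi * (Q xi xmi y + t * e xi xmi y) *
        Real.log ((N₀ xi y + t * nE xi y) / (D₀ y + t * dE y)))
      (pi xi * pc xi xmi * e xi xmi y * Real.log (N₀ xi y / D₀ y)
        + pi xi * pc xi xmi * Q xi xmi y * (nE xi y / N₀ xi y - dE y / D₀ y)) 0 := by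
    intro xi xmi y
    have h1 : HasDerivAt (fun t : ℝ => Q xi xmi y + t * e xi xmi y) (e xi xmi y) 0 := by
      simpa using ((hasDerivAt_id (0:ℝ)).mul_const (e xi xmi y)).const_add (Q xi xmi y)
    have h2 : HasDerivAt (fun t : ℝ => N₀ xi y + t * nE xi y) (nE xi y) 0 := by
      simpa using ((hasDerivAt_id (0:ℝ)).mul_const (nE xi y)).const_add (N₀ xi y)
    have h3 : HasDerivAt (fun t : ℝ => D₀ y + t * dE y) (dE y) 0 := by
      simpa using ((hasDerivAt_id (0:ℝ)).mul_const (dE y)).const_add (D₀ y)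
    have hd0 : D₀ y + (0:ℝ) * dE y ≠ 0 := by simpa using (hD y).ne'
    have hq := h2.fun_div h3 hd0
    have hne : (N₀ xi y + (0:ℝ) * nE xi y) / (D₀ y + (0:ℝ) * dE y) ≠ 0 := by
      simpa using (div_pos (hN xi y) (hD y)).ne'
    have hlog := hq.log hne
    have hmul := (h1.const_mul (pi xi * pc xi xmi)).fun_mul hlog
    refine hmul.congr_deriv ?_
    have hNne := (hN xi y).ne'
    have hDne := (hD y).ne'
    simp only [zero_mul, add_zero]
    field_simp
  have hsum : HasDerivAt
      (fun t : ℝ => ∑ xi, ∑ xmi, ∑ y,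
        pi xi * pc xi xmi * (Q xi xmi y + t * e xi xmi y) *
          Real.log ((N₀ xi y + t * nE xi y) / (D₀ y + t * dE y)))
      (∑ xi, ∑ xmi, ∑ y,
        (pi xi * pc xi xmi * e xi xmi y * Real.log (N₀ xi y / D₀ y)
          + pi xi * pc xi xmi * Q xi xmi y * (nE xi y / N₀ xi y - dE y / D₀ y))) 0 :=
    HasDerivAt.fun_sum fun xi _ => HasDerivAt.fun_sum fun xmi _ => HasDerivAt.fun_sum fun y _ =>
      hderiv xi xmi y
  convert hsum using 1
  -- now compute the sum of derivatives
  have hsplit : ∀ xi xmi y,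
      pi xi * pc xi xmi * e xi xmi y * Real.log (N₀ xi y / D₀ y)
        + pi xi * pc xi xmi * Q xi xmi y * (nE xi y / N₀ xi y - dE y / D₀ y)
      = pi xi * pc xi xmi * e xi xmi y * Real.log (N₀ xi y / D₀ y)
        + (pi xi * pc xi xmi * Q xi xmi y * (nE xi y / N₀ xi y)
           - pi xi * pc xi xmi * Q xi xmi y * (dE y / D₀ y)) := fun xi xmi y => by ring
  simp only [hsplit, Finset.sum_add_distrib, Finset.sum_sub_distrib]
  have hA : (∑ xi, ∑ xmi, ∑ y,
      pi xi * pc xi xmi * e xi xmi y * Real.log (N₀ xi y / D₀ y))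
      = pi a * pc a m * Real.log (N₀ a y₀ / D₀ y₀) := by
    rw [Fintype.sum_eq_single a (fun xi hxi => by simp [e, hxi])]
    rw [Fintype.sum_eq_single m (fun xmi hxmi => by simp [e, hxmi])]
    rw [Fintype.sum_eq_single y₀ (fun y hy => by simp [e, hy])]
    simp [e]
  have hS1 : (∑ xi, ∑ xmi, ∑ y,
      pi xi * pc xi xmi * Q xi xmi y * (nE xi y / N₀ xi y))
      = pi a * pc a m := by
    rw [Fintype.sum_eq_single a (fun xi hxi => by simp [nE, hxi])]
    have : ∀ xmi, (∑ y, pi a * pc a xmi * Q a xmi y * (nE a y / N₀ a y))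
        = pi a * pc a xmi * Q a xmi y₀ * (pc a m / N₀ a y₀) := by
      intro xmi
      rw [Fintype.sum_eq_single y₀ (fun y hy => by simp [nE, hy])]
      simp [nE]
    simp only [this]
    have hfac : ∀ xmi, pi a * pc a xmi * Q a xmi y₀ * (pc a m / N₀ a y₀)
        = (pi a * (pc a m / N₀ a y₀)) * (pc a xmi * Q a xmi y₀) := fun xmi => by ring
    simp only [hfac, ← Finset.mul_sum]
    have : (∑ xmi, pc a xmi * Q a xmi y₀) = N₀ a y₀ := rfl
    rw [this]
    rw [mul_assoc, div_mul_cancel₀ _ (hN a y₀).ne']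
  have hS2 : (∑ xi, ∑ xmi, ∑ y,
      pi xi * pc xi xmi * Q xi xmi y * (dE y / D₀ y))
      = pi a * pc a m := by
    have hy : ∀ xi xmi, (∑ y, pi xi * pc xi xmi * Q xi xmi y * (dE y / D₀ y))
        = pi xi * pc xi xmi * Q xi xmi y₀ * (pi a * pc a m / D₀ y₀) := by
      intro xi xmi
      rw [Fintype.sum_eq_single y₀ (fun y hy => by simp [dE, hy])]
      simp [dE]
    simp only [hy]
    have hfac : ∀ xi xmi, pi xi * pc xi xmi * Q xi xmi y₀ * (pi a * pc a m / D₀ y₀)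
        = (pi a * pc a m / D₀ y₀) * (pi xi * pc xi xmi * Q xi xmi y₀) := fun xi xmi => by ring
    simp only [hfac, ← Finset.mul_sum]
    have : (∑ xi, ∑ xmi, pi xi * pc xi xmi * Q xi xmi y₀) = D₀ y₀ := rfl
    rw [this]
    rw [div_mul_cancel₀ _ (hD y₀).ne']
  rw [hA, hS1, hS2]
  ring
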